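/- Centered bound: for any channel W and integer k ≥ 2 with k ≤ |X|, S(W,k) − 1/k ≥ (1 − (1 − 1/k)^{k−1}) · (S^NS(W,k) − 1/k). -/

import Mathlib

open Finset

/-- Maximum success probability `S(W,k) = (1/k) max_{S ⊆ X, |S| ≤ k} ∑_y max_{x∈S} W(y|x)`. -/
noncomputable def Schan {X Y : Type*} [Fintype X] [Fintype Y] (W : X → Y → ℝ) (k : ℕ) : ℝ :=
  (1 / k) * sSup { v : ℝ | ∃ S : Finset X, S.card ≤ k ∧ v = ∑ y, ⨆ x ∈ S, W x y }

/-- Non-signaling (LP relaxation) value `S^NS(W,k)`. -/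
noncomputable def SchanNS {X Y : Type*} [Fintype X] [Fintype Y] (W : X → Y → ℝ) (k : ℕ) : ℝ :=
  sSup { v : ℝ | ∃ r : X → Y → ℝ, ∃ p : X → ℝ,
    (∀ x y, 0 ≤ r x y) ∧ (∀ x y, r x y ≤ p x) ∧ (∀ x, p x ≤ 1) ∧
    (∀ y, ∑ x, r x y ≤ 1) ∧ (∑ x, p x = k) ∧
    v = (1 / k) * ∑ x, ∑ y, W x y * r x y }

section Aux

variable {X Y : Type*} [Fintype X] [Fintype Y]

lemma mval_nonneg (W : X → Y → ℝ) (hW : ∀ x y, 0 ≤ W x y) (S : Finset X) (y : Y) :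
    0 ≤ ⨆ x ∈ S, W x y :=
  Real.iSup_nonneg fun x => Real.iSup_nonneg fun _ => hW x y

lemma le_mval (W : X → Y → ℝ) (S : Finset X) (y : Y) {x : X} (hx : x ∈ S) :
    W x y ≤ ⨆ x ∈ S, W x y := by
  have hb : BddAbove (Set.range fun x => ⨆ _ : x ∈ S, W x y) :=
    (Set.finite_range _).bddAbove
  have h1 : (⨆ _ : x ∈ S, W x y) ≤ ⨆ x ∈ S, W x y := le_ciSup hb x
  rwa [ciSup_pos (p := x ∈ S) (f := fun _ => W x y) hx] at h1

lemma mval_le (W : X → Y → ℝ) (S : Finset X) (y : Y) {t : ℝ} (ht : 0 ≤ t)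
    (h : ∀ x ∈ S, W x y ≤ t) : (⨆ x ∈ S, W x y) ≤ t :=
  Real.iSup_le (fun x => Real.iSup_le (fun hx => h x hx) ht) ht

lemma key_chain (W : X → Y → ℝ) (hW_nonneg : ∀ x y, 0 ≤ W x y)
    (hW_sum : ∀ x, ∑ y, W x y = 1) (k : ℕ) (hk : 2 ≤ k)
    (r : X → Y → ℝ) (p : X → ℝ)
    (hr0 : ∀ x y, 0 ≤ r x y) (hrp : ∀ x y, r x y ≤ p x)
    (hry : ∀ y, ∑ x, r x y ≤ 1) (hpk : ∑ x, p x = k)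
    [Nonempty X] :
    ∀ t : ℕ, ∃ S : Finset X, S.card ≤ t + 1 ∧
      (∑ x, ∑ y, W x y * r x y) - (∑ y, ⨆ x ∈ S, W x y) ≤
        (1 - 1/(k:ℝ))^t * ((∑ x, ∑ y, W x y * r x y) - 1) := by
  classical
  have hk0 : (0:ℝ) < k := by positivity
  have hNY : Nonempty Y := by
    by_contra h
    have : IsEmpty Y := not_nonempty_iff.mp h
    have := hW_sum (Classical.arbitrary X)
    simp at this
  have hp0 : ∀ x, 0 ≤ p x := fun x =>
    le_trans (hr0 x (Classical.arbitrary Y)) (hrp x (Classical.arbitrary Y))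
  set G : ℝ := ∑ x, ∑ y, W x y * r x y with hG
  -- the greedy step
  have step : ∀ S : Finset X, ∃ x0 : X,
      G - (∑ y, ⨆ x ∈ insert x0 S, W x y) ≤ (1 - 1/(k:ℝ)) * (G - ∑ y, ⨆ x ∈ S, W x y) := by
    intro S
    set f : ℝ := ∑ y, ⨆ x ∈ S, W x y with hf
    set m : Y → ℝ := fun y => ⨆ x ∈ S, W x y with hm
    -- gain of adding x
    set g : X → ℝ := fun x => ∑ y, (max (W x y) (m y) - m y) with hg
    -- averaging: ∑ p x * g x ≥ G - f
    have havg : G - f ≤ ∑ x, p x * g x := by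
      have h1 : ∀ x, ∑ y, r x y * (W x y - m y) ≤ p x * g x := by
        intro x
        rw [hg, mul_sum]
        apply sum_le_sum
        intro y _
        rcases le_total (W x y) (m y) with h | h
        · have : max (W x y) (m y) = m y := max_eq_right h
          rw [this]
          simp only [sub_self, mul_zero]
          exact mul_nonpos_of_nonneg_of_nonpos (hr0 x y) (by linarith)
        · have : max (W x y) (m y) = W x y := max_eq_left h
          rw [this]
          exact mul_le_mul_of_nonneg_right (hrp x y) (by linarith)
      have h2 : G - f ≤ ∑ x, ∑ y, r x y * (W x y - m y) := by
        have e1 : ∑ x, ∑ y, r x y * (W x y - m y)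
            = G - ∑ y, (∑ x, r x y) * m y := by
          calc ∑ x, ∑ y, r x y * (W x y - m y)
              = ∑ y, ∑ x, r x y * (W x y - m y) := Finset.sum_comm
            _ = ∑ y, ((∑ x, W x y * r x y) - (∑ x, r x y) * m y) := by
                apply Finset.sum_congr rfl
                intro y _
                rw [Finset.sum_mul, ← Finset.sum_sub_distrib]
                apply Finset.sum_congr rfl
                intro x _
                ring
            _ = (∑ y, ∑ x, W x y * r x y) - ∑ y, (∑ x, r x y) * m y :=
                Finset.sum_sub_distrib _ _
            _ = G - ∑ y, (∑ x, r x y) * m y := by rw [hG, Finset.sum_comm]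
        rw [e1]
        have : ∑ y, (∑ x, r x y) * m y ≤ ∑ y, m y := by
          apply sum_le_sum
          intro y _
          have hmy : 0 ≤ m y := mval_nonneg W hW_nonneg S y
          nlinarith [hry y]
        have hfm : f = ∑ y, m y := rfl
        linarith
      calc G - f ≤ ∑ x, ∑ y, r x y * (W x y - m y) := h2
        _ ≤ ∑ x, p x * g x := sum_le_sum fun x _ => h1 x
    -- existence of good x
    have hex : ∃ x : X, (G - f) / k ≤ g x := by
      by_contra hcon
      push_neg at hcon
      obtain ⟨x0, hx0⟩ : ∃ x, (0:ℝ) < p x := by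
        by_contra hc
        push_neg at hc
        have : ∑ x, p x ≤ 0 := Finset.sum_nonpos fun x _ => hc x
        rw [hpk] at this; linarith
      have hlt : ∑ x, p x * g x < ∑ x, p x * ((G - f) / k) := by
        apply Finset.sum_lt_sum
        · intro x _
          exact mul_le_mul_of_nonneg_left (le_of_lt (hcon x)) (hp0 x)
        · exact ⟨x0, Finset.mem_univ x0, by
            exact mul_lt_mul_of_pos_left (hcon x0) hx0⟩
      rw [← Finset.sum_mul, hpk] at hlt
      have : (k:ℝ) * ((G - f) / k) = G - f := by field_simp
      rw [this] at hlt
      linarith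
    obtain ⟨x, hx⟩ := hex
    refine ⟨x, ?_⟩
    -- f (insert x S) ≥ f + g x
    have hins : f + g x ≤ ∑ y, ⨆ x' ∈ insert x S, W x' y := by
      have : ∀ y, max (W x y) (m y) ≤ ⨆ x' ∈ insert x S, W x' y := by
        intro y
        apply max_le
        · exact le_mval W _ y (mem_insert_self x S)
        · exact mval_le W S y (mval_nonneg W hW_nonneg _ y)
            (fun x' hx' => le_mval W _ y (mem_insert_of_mem hx'))
      calc f + g x = ∑ y, max (W x y) (m y) := by
            rw [hg, hf]
            rw [← Finset.sum_add_distrib]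
            apply Finset.sum_congr rfl
            intro y _
            have hfm : (⨆ x ∈ S, W x y) = m y := rfl
            rw [hfm]; ring
        _ ≤ _ := sum_le_sum fun y _ => this y
    have hk' : (G - f) / k ≤ g x := hx
    have h5 : G - (∑ y, ⨆ x' ∈ insert x S, W x' y) ≤ G - f - (G - f)/k := by linarith
    calc G - (∑ y, ⨆ x' ∈ insert x S, W x' y) ≤ G - f - (G - f)/k := h5
      _ = (1 - 1/(k:ℝ)) * (G - f) := by field_simp
  -- induction
  intro t
  induction t with
  | zero =>
    refine ⟨{Classical.arbitrary X}, by simp, ?_⟩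
    have h1 : (1:ℝ) ≤ ∑ y, ⨆ x ∈ ({Classical.arbitrary X} : Finset X), W x y := by
      rw [← hW_sum (Classical.arbitrary X)]
      exact sum_le_sum fun y _ => le_mval W _ y (mem_singleton_self _)
    rw [pow_zero, one_mul]
    linarith
  | succ t ih =>
    obtain ⟨S, hcard, hS⟩ := ih
    obtain ⟨x, hx⟩ := step S
    refine ⟨insert x S, by have := Finset.card_insert_le x S; omega, ?_⟩

    have h10 : (0:ℝ) ≤ 1 - 1/(k:ℝ) := by
      have : 1/(k:ℝ) ≤ 1/2 := by
        apply one_div_le_one_div_of_le <;> [norm_num; exact_mod_cast hk]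
      linarith
    calc G - (∑ y, ⨆ x'' ∈ insert x S, W x'' y)
        ≤ (1 - 1/(k:ℝ)) * (G - ∑ y, ⨆ x ∈ S, W x y) := hx
      _ ≤ (1 - 1/(k:ℝ)) * ((1 - 1/(k:ℝ))^t * (G - 1)) :=
          mul_le_mul_of_nonneg_left hS h10
      _ = (1 - 1/(k:ℝ))^(t+1) * (G - 1) := by ring

end Aux

/-- centered bound
`S(W,k) − 1/k ≥ (1 − (1 − 1/k)^{k−1}) · (S^NS(W,k) − 1/k)` for `2 ≤ k ≤ |X|`. -/
theorem centered_bound {X Y : Type*} [Fintype X] [Fintype Y] (W : X → Y → ℝ)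
    (hW_nonneg : ∀ x y, 0 ≤ W x y) (hW_sum : ∀ x, ∑ y, W x y = 1)
    (k : ℕ) (hk : 2 ≤ k) (hkX : k ≤ Fintype.card X) :
    (1 - (1 - 1 / (k : ℝ))^(k - 1)) * (SchanNS W k - 1 / k) ≤ Schan W k - 1 / k := by
  have hcardX : 0 < Fintype.card X := by omega
  have hNX : Nonempty X := Fintype.card_pos_iff.mp hcardX
  have hk0 : (0:ℝ) < k := by positivity
  have h10 : (0:ℝ) ≤ 1 - 1/(k:ℝ) := by
    have : 1/(k:ℝ) ≤ 1/2 := by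
      apply one_div_le_one_div_of_le <;> [norm_num; exact_mod_cast hk]
    linarith
  have h11 : (1 - 1/(k:ℝ)) < 1 := by
    have : 0 < 1/(k:ℝ) := by positivity
    linarith
  set c : ℝ := (1 - 1/(k:ℝ))^(k-1) with hc
  have hc1 : c < 1 := pow_lt_one₀ h10 h11 (by omega)
  have hc0 : 0 ≤ c := pow_nonneg h10 _
  set a : ℝ := 1 - c with ha
  have ha0 : 0 < a := by linarith
  -- bound on Schan's inner set
  have hbdd : BddAbove { v : ℝ | ∃ S : Finset X, S.card ≤ k ∧ v = ∑ y, ⨆ x ∈ S, W x y } := by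
    refine ⟨∑ y : Y, ∑ x : X, W x y, ?_⟩
    rintro v ⟨S, _, rfl⟩
    apply sum_le_sum
    intro y _
    apply mval_le W S y (Finset.sum_nonneg fun x _ => hW_nonneg x y)
    intro x _
    exact Finset.single_le_sum (fun x' _ => hW_nonneg x' y) (Finset.mem_univ x)
  -- per-point bound
  have hpoint : ∀ v ∈ { v : ℝ | ∃ r : X → Y → ℝ, ∃ p : X → ℝ,
      (∀ x y, 0 ≤ r x y) ∧ (∀ x y, r x y ≤ p x) ∧ (∀ x, p x ≤ 1) ∧
      (∀ y, ∑ x, r x y ≤ 1) ∧ (∑ x, p x = k) ∧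
      v = (1 / k) * ∑ x, ∑ y, W x y * r x y },
      a * (v - 1/(k:ℝ)) ≤ Schan W k - 1/(k:ℝ) := by
    rintro v ⟨r, p, hr0, hrp, hp1, hry, hpk, rfl⟩
    set G : ℝ := ∑ x, ∑ y, W x y * r x y with hG
    obtain ⟨S, hcard, hS⟩ := key_chain W hW_nonneg hW_sum k hk r p hr0 hrp hry hpk (k-1)
    have hcard' : S.card ≤ k := by omega
    have hmem : (∑ y, ⨆ x ∈ S, W x y) ∈
        { v : ℝ | ∃ S : Finset X, S.card ≤ k ∧ v = ∑ y, ⨆ x ∈ S, W x y } :=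
      ⟨S, hcard', rfl⟩
    have hle : (∑ y, ⨆ x ∈ S, W x y) ≤ sSup { v : ℝ | ∃ S : Finset X, S.card ≤ k ∧
        v = ∑ y, ⨆ x ∈ S, W x y } := le_csSup hbdd hmem
    have hSchan : (1/(k:ℝ)) * (∑ y, ⨆ x ∈ S, W x y) ≤ Schan W k := by
      rw [Schan]
      exact mul_le_mul_of_nonneg_left hle (by positivity)
    -- f S ≥ G - c*(G-1) = 1 + a*(G-1)
    have hfS : 1 + a * (G - 1) ≤ ∑ y, ⨆ x ∈ S, W x y := by
      have : G - (∑ y, ⨆ x ∈ S, W x y) ≤ c * (G - 1) := hS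
      rw [ha]; linarith
    have hvk : (1/(k:ℝ)) * G - 1/(k:ℝ) = (G - 1)/k := by ring
    have : a * ((1/(k:ℝ)) * G - 1/(k:ℝ)) = a * (G-1) / k := by rw [hvk]; ring
    rw [this]
    have h2 : (1 + a * (G-1)) / k ≤ Schan W k := by
      calc (1 + a * (G-1)) / k = (1/(k:ℝ)) * (1 + a * (G-1)) := by ring
        _ ≤ (1/(k:ℝ)) * (∑ y, ⨆ x ∈ S, W x y) :=
            mul_le_mul_of_nonneg_left hfS (by positivity)
        _ ≤ Schan W k := hSchan
    have h3 : a * (G-1)/k = (1 + a * (G-1))/k - 1/k := by ring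
    rw [h3]
    linarith
  -- the NS set is nonempty
  have hne : { v : ℝ | ∃ r : X → Y → ℝ, ∃ p : X → ℝ,
      (∀ x y, 0 ≤ r x y) ∧ (∀ x y, r x y ≤ p x) ∧ (∀ x, p x ≤ 1) ∧
      (∀ y, ∑ x, r x y ≤ 1) ∧ (∑ x, p x = k) ∧
      v = (1 / k) * ∑ x, ∑ y, W x y * r x y }.Nonempty := by
    refine ⟨0, fun _ _ => 0, fun _ => (k:ℝ)/(Fintype.card X : ℝ), ?_, ?_, ?_, ?_, ?_, ?_⟩
    · intro x y; exact le_rfl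
    · intro x y
      show (0:ℝ) ≤ (k:ℝ)/(Fintype.card X : ℝ)
      positivity
    · intro x
      show (k:ℝ)/(Fintype.card X : ℝ) ≤ 1
      rw [div_le_one (by exact_mod_cast hcardX)]
      exact_mod_cast hkX
    · intro y; simp
    · show ∑ _x : X, (k:ℝ)/(Fintype.card X : ℝ) = k
      rw [Finset.sum_const, Finset.card_univ, nsmul_eq_mul]
      have hne0 : (Fintype.card X : ℝ) ≠ 0 := by
        exact_mod_cast Nat.pos_iff_ne_zero.mp hcardX
      field_simp
    · simp
  -- combine
  have hub : SchanNS W k ≤ 1/(k:ℝ) + (Schan W k - 1/(k:ℝ)) / a := by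
    rw [SchanNS]
    apply csSup_le hne
    intro v hv
    have := hpoint v hv
    rw [← sub_le_iff_le_add']
    rw [le_div_iff₀ ha0]
    linarith [this]
  calc a * (SchanNS W k - 1/(k:ℝ)) ≤ a * ((1/(k:ℝ) + (Schan W k - 1/(k:ℝ)) / a) - 1/(k:ℝ)) :=
        mul_le_mul_of_nonneg_left (by linarith) (le_of_lt ha0)
    _ = Schan W k - 1/(k:ℝ) := by field_simp; ring
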